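/- arXiv:1404.5791 — 3 statements merged into one kernel-verified Lean document; each statement's English description precedes it below -/
import Mathlib

section
/- Let ς : ℝ → ℝ be given with ς(x) > 0 and D ∈ ℝ^{2d} a fixed column vector, A a (2d)×(2d) orthogonal matrix, θ₁ ∈ ℝ, and let H be the symmetric (4+4d)×(4+4d) matrix in block form H = [[0,1,0,0,0,0],[1,0,−1,0,0,0],[0,−1,0,ς,0,0],[0,0,ς,0,0,Dᵀ],[0,0,0,0,0,−Aᵀ/ς],[0,0,0,D,−A/ς,−θ₁ I_{2d}]] (with rows/columns indexed by the variables t, θ, r, τ, v ∈ ℝ^{2d}, Ω ∈ ℝ^{2d}). Then det(H) = ς^{2−4d}. -/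
open Matrix

lemma sign_sumComm_fin (n : ℕ) :
    Equiv.Perm.sign (Equiv.sumComm (Fin n) (Fin n)) = (-1) ^ n := by
  let e : Fin n × Fin 2 ≃ Fin n ⊕ Fin n :=
    { toFun := fun x => if x.2 = 0 then Sum.inl x.1 else Sum.inr x.1
      invFun := Sum.elim (fun a => (a, 0)) (fun a => (a, 1))
      left_inv := by rintro ⟨a, b⟩; fin_cases b <;> simp
      right_inv := by rintro (a | a) <;> simp }
  have h := Equiv.Perm.sign_eq_sign_of_equiv
      (Equiv.prodCongrRight fun _ : Fin n => Equiv.swap (0 : Fin 2) 1)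
      (Equiv.sumComm (Fin n) (Fin n)) e ?_
  · rw [← h, Equiv.Perm.sign_prodCongrRight]
    simp [Equiv.Perm.sign_swap]
  · rintro ⟨a, b⟩
    fin_cases b <;> simp [e, Equiv.swap_apply_of_ne_of_ne]

lemma det_J_fin (n : ℕ) :
    (Matrix.fromBlocks (0 : Matrix (Fin n) (Fin n) ℝ) (1 : Matrix (Fin n) (Fin n) ℝ)
      (1 : Matrix (Fin n) (Fin n) ℝ) (0 : Matrix (Fin n) (Fin n) ℝ)).det = (-1) ^ n := by
  have heq : Matrix.fromBlocks (0 : Matrix (Fin n) (Fin n) ℝ) 1 1 0 =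
      (1 : Matrix (Fin n ⊕ Fin n) (Fin n ⊕ Fin n) ℝ).submatrix
        (Equiv.sumComm (Fin n) (Fin n)) id := by
    ext (i | i) (j | j) <;>
      simp [Matrix.one_apply, Matrix.submatrix_apply, Sum.inl_injective.eq_iff,
        Sum.inr_injective.eq_iff, eq_comm]
  rw [heq]
  have := Matrix.det_permute (Equiv.sumComm (Fin n) (Fin n))
      (1 : Matrix (Fin n ⊕ Fin n) (Fin n ⊕ Fin n) ℝ)
  simpa [Matrix.submatrix, sign_sumComm_fin] using this

lemma det_fromBlocks_zero11 {n : ℕ} (B C D : Matrix (Fin n) (Fin n) ℝ) :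
    (Matrix.fromBlocks 0 B C D).det = (-1) ^ n * (B.det * C.det) := by
  have heq : Matrix.fromBlocks (0 : Matrix (Fin n) (Fin n) ℝ) B C D =
      Matrix.fromBlocks B 0 D C * Matrix.fromBlocks (0 : Matrix (Fin n) (Fin n) ℝ)
        (1 : Matrix (Fin n) (Fin n) ℝ) (1 : Matrix (Fin n) (Fin n) ℝ)
        (0 : Matrix (Fin n) (Fin n) ℝ) := by
    rw [Matrix.fromBlocks_multiply]; simp
  rw [heq, Matrix.det_mul, det_J_fin, Matrix.det_fromBlocks_zero₁₂]
  ring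

/-- Let `ς > 0` be a scalar, `D ∈ ℝ^{2d}` a fixed column vector,
`A` a `(2d)×(2d)` orthogonal matrix, `θ₁ ∈ ℝ`, and let `H` be the symmetric
`(4+4d)×(4+4d)` matrix in block form
`H = [[0,1,0,0,0,0],[1,0,-1,0,0,0],[0,-1,0,ς,0,0],[0,0,ς,0,0,Dᵀ],
      [0,0,0,0,0,-Aᵀ/ς],[0,0,0,D,-A/ς,-θ₁ I_{2d}]]`
(rows/columns indexed by the variables `t, θ, r, τ, v ∈ ℝ^{2d}, Ω ∈ ℝ^{2d}`).
Then `det H = ς^{2-4d}`. -/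
theorem det_hessian_block_matrix {d : ℕ} (ς θ₁ : ℝ) (hς : 0 < ς)
    (D : Fin (2 * d) → ℝ) (A : Matrix (Fin (2 * d)) (Fin (2 * d)) ℝ)
    (hA : A * A.transpose = 1) :
    letI TL : Matrix (Fin 4) (Fin 4) ℝ :=
      !![0, 1, 0, 0; 1, 0, -1, 0; 0, -1, 0, ς; 0, 0, ς, 0]
    letI TR : Matrix (Fin 4) (Fin (2 * d) ⊕ Fin (2 * d)) ℝ :=
      Matrix.of fun i j =>
        Sum.elim (fun _ => (0 : ℝ)) (fun k => if i = (3 : Fin 4) then D k else 0) j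
    letI BR : Matrix (Fin (2 * d) ⊕ Fin (2 * d)) (Fin (2 * d) ⊕ Fin (2 * d)) ℝ :=
      Matrix.fromBlocks 0 (-(ς⁻¹ • A.transpose)) (-(ς⁻¹ • A)) (-(θ₁ • (1 : Matrix (Fin (2 * d)) (Fin (2 * d)) ℝ)))
    letI H : Matrix (Fin 4 ⊕ (Fin (2 * d) ⊕ Fin (2 * d)))
        (Fin 4 ⊕ (Fin (2 * d) ⊕ Fin (2 * d))) ℝ :=
      Matrix.fromBlocks TL TR TR.transpose BR
    H.det = ς ^ ((2 : ℤ) - 4 * (d : ℤ)) := by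
  have hςne : ς ≠ 0 := ne_of_gt hς
  set TL : Matrix (Fin 4) (Fin 4) ℝ :=
    !![0, 1, 0, 0; 1, 0, -1, 0; 0, -1, 0, ς; 0, 0, ς, 0] with hTL
  set TR : Matrix (Fin 4) (Fin (2 * d) ⊕ Fin (2 * d)) ℝ :=
    Matrix.of (fun i j =>
      Sum.elim (fun _ => (0 : ℝ)) (fun k => if i = (3 : Fin 4) then D k else 0) j) with hTR
  set BR : Matrix (Fin (2 * d) ⊕ Fin (2 * d)) (Fin (2 * d) ⊕ Fin (2 * d)) ℝ :=
    Matrix.fromBlocks 0 (-(ς⁻¹ • A.transpose)) (-(ς⁻¹ • A))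
      (-(θ₁ • (1 : Matrix (Fin (2 * d)) (Fin (2 * d)) ℝ))) with hBR
  have hMinv : TL * !![0, 1, 0, ς⁻¹; 1, 0, 0, 0; 0, 0, 0, ς⁻¹; ς⁻¹, 0, ς⁻¹, 0] = 1 := by
    ext i j
    fin_cases i <;> fin_cases j <;>
      simp [hTL, Matrix.mul_apply, Fin.sum_univ_four, Matrix.one_apply, hςne,
        Matrix.vecHead, Matrix.vecTail]
  letI : Invertible TL := invertibleOfRightInverse TL _ hMinv
  rw [Matrix.det_fromBlocks₁₁]
  have hinv : (⅟TL : Matrix (Fin 4) (Fin 4) ℝ) =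
      !![0, 1, 0, ς⁻¹; 1, 0, 0, 0; 0, 0, 0, ς⁻¹; ς⁻¹, 0, ς⁻¹, 0] := rfl
  have hzero : TR.transpose * ⅟TL * TR = 0 := by
    rw [hinv]
    ext p q
    rcases p with p | p <;> rcases q with q | q <;>
      simp [hTR, Matrix.mul_apply, Fin.sum_univ_four]
  rw [hzero, sub_zero]
  have hdetTL : TL.det = ς ^ 2 := by
    rw [hTL]
    rw [Matrix.det_succ_row_zero]
    simp [Fin.sum_univ_succ, Matrix.det_fin_three]
    rw [show Fin.succAbove (1 : Fin 4) 2 = 3 from rfl]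
    simp
    ring
  have heven : Even (2 * d) := ⟨d, by ring⟩
  have hdetBR : BR.det = ς⁻¹ ^ (4 * d) := by
    rw [hBR, det_fromBlocks_zero11, ← neg_smul, ← neg_smul, Matrix.det_smul, Matrix.det_smul,
      Fintype.card_fin, heven.neg_one_pow, heven.neg_pow, Matrix.det_transpose]
    have hAA : A.det * A.det = 1 := by
      have := congrArg Matrix.det hA
      rwa [Matrix.det_mul, Matrix.det_transpose, Matrix.det_one] at this
    calc (1 : ℝ) * (ς⁻¹ ^ (2 * d) * A.det * (ς⁻¹ ^ (2 * d) * A.det))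
        = ς⁻¹ ^ (2 * d + 2 * d) * (A.det * A.det) := by ring
      _ = ς⁻¹ ^ (4 * d) := by rw [hAA, mul_one]; ring_nf
  rw [hdetTL, hdetBR]
  have hz : ((2 : ℤ) - 4 * (d : ℤ)) = (2 : ℤ) + (-(4 * d : ℕ) : ℤ) := by push_cast; ring
  rw [hz, zpow_add₀ hςne, _root_.zpow_neg, zpow_natCast, inv_pow]
  norm_num
  try exact Or.inl rfl
end

section
/- In the setting of the previous statement, the derivative of ς along υ is υ(ς) = −ς·(∂_θ ς), and consequently the rescaled 1-form (1/ς)·α is invariant under the flow of υ: L_υ((1/ς)α) = 0. -/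
/-- An abstract "Cartan calculus": a commutative ring `F` of smooth functions,
an `F`-module `V` of vector fields, `F`-modules `Ω1`, `Ω2` of 1- and 2-forms,
with the pairing of 1-forms and vector fields, interior product of 2-forms with
vector fields, exterior derivatives `d0 : F → Ω1`, `d1 : Ω1 → Ω2`, and the wedge
product of 1-forms, satisfying the usual Leibniz and contraction rules. -/
structure CartanCalc (F V Ω1 Ω2 : Type*) [CommRing F]
    [AddCommGroup V] [Module F V] [AddCommGroup Ω1] [Module F Ω1]
    [AddCommGroup Ω2] [Module F Ω2] where
  /-- pairing of a 1-form with a vector field -/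
  pair : Ω1 →ₗ[F] V →ₗ[F] F
  /-- interior product of a 2-form with a vector field -/
  ι2 : Ω2 →ₗ[F] V →ₗ[F] Ω1
  /-- exterior derivative of functions -/
  d0 : F →+ Ω1
  /-- exterior derivative of 1-forms -/
  d1 : Ω1 →+ Ω2
  /-- wedge product of 1-forms -/
  wedge : Ω1 → Ω1 → Ω2
  d0_mul : ∀ f g : F, d0 (f * g) = f • d0 g + g • d0 f
  d1_smul : ∀ (f : F) (a : Ω1), d1 (f • a) = wedge (d0 f) a + f • d1 a
  ι2_wedge : ∀ (v : V) (a b : Ω1), ι2 (wedge a b) v = pair a v • b - pair b v • a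
  ι2_pair_self : ∀ (v : V) (ω : Ω2), pair (ι2 ω v) v = 0

/-- In the setting of Statement 11 (`υ = υʰ - ς·∂/∂θ` with
`α(υʰ) = 0` and `ι(υʰ)(dα) = dʰς = dς - (∂_θ ς)α`), the derivative of `ς` along
`υ` is `υ(ς) = dς(υ) = -ς·(∂_θ ς)`, and consequently the rescaled 1-form
`(1/ς)·α` is invariant under the flow of `υ`:
`L_υ((1/ς)α) = d(ι_υ((1/ς)α)) + ι_υ(d((1/ς)α)) = 0`. -/
theorem rescaled_contact_form_invariant {F V Ω1 Ω2 : Type*} [CommRing F]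
    [AddCommGroup V] [Module F V] [AddCommGroup Ω1] [Module F Ω1]
    [AddCommGroup Ω2] [Module F Ω2]
    (C : CartanCalc F V Ω1 Ω2) (α : Ω1) (θv : V) (ς ςinv : F) (υh : V)
    (hθ : C.pair α θv = 1)
    (hReeb : C.ι2 (C.d1 α) θv = 0)
    (hhor : C.pair α υh = 0)
    (hυh : C.ι2 (C.d1 α) υh = C.d0 ς - C.pair (C.d0 ς) θv • α)
    (hinv : ς * ςinv = 1) :
    C.pair (C.d0 ς) (υh - ς • θv) = -(ς * C.pair (C.d0 ς) θv) ∧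
    C.d0 (C.pair (ςinv • α) (υh - ς • θv))
        + C.ι2 (C.d1 (ςinv • α)) (υh - ς • θv) = 0 := by
  have hd01 : C.d0 1 = 0 := by
    have h := C.d0_mul 1 1
    simp at h
    -- h : C.d0 1 = C.d0 1 + C.d0 1 perhaps
    exact h
  have hpαυ : C.pair α (υh - ς • θv) = -ς := by
    simp [map_sub, map_smul, hθ, hhor, smul_eq_mul]
  have h2 : C.ι2 (C.d1 α) (υh - ς • θv) = C.d0 ς - C.pair (C.d0 ς) θv • α := by
    simp [map_sub, map_smul, hReeb, hυh]
  have hpart1 : C.pair (C.d0 ς) (υh - ς • θv) = -(ς * C.pair (C.d0 ς) θv) := by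
    have h0 := C.ι2_pair_self (υh - ς • θv) (C.d1 α)
    rw [h2] at h0
    simp only [map_sub, map_smul, LinearMap.sub_apply, LinearMap.smul_apply,
      hhor, hθ, smul_eq_mul] at h0
    simp only [map_sub, map_smul, smul_eq_mul]
    linear_combination h0
  refine ⟨hpart1, ?_⟩
  have hdinv : ς • C.d0 ςinv + ςinv • C.d0 ς = 0 := by
    have h := C.d0_mul ς ςinv
    rw [hinv, hd01] at h
    exact h.symm
  have hX : C.pair (C.d0 ςinv) (υh - ς • θv) = ςinv * C.pair (C.d0 ς) θv := by
    have e1 : ς * C.pair (C.d0 ςinv) (υh - ς • θv)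
        + ςinv * C.pair (C.d0 ς) (υh - ς • θv) = 0 := by
      have h := congrArg (fun a => C.pair a (υh - ς • θv)) hdinv
      simpa [map_add, map_smul, smul_eq_mul] using h
    rw [hpart1] at e1
    linear_combination ςinv * e1 + (ςinv * C.pair (C.d0 ς) θv
      - C.pair (C.d0 ςinv) (υh - ς • θv)) * hinv
  have hpairinv : C.pair (ςinv • α) (υh - ς • θv) = -1 := by
    rw [map_smul, LinearMap.smul_apply, hpαυ, smul_eq_mul]
    linear_combination -hinv
  rw [hpairinv, C.d1_smul, map_add, LinearMap.add_apply, C.ι2_wedge, hX,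
    map_smul, LinearMap.smul_apply, h2, hpαυ]
  have hdneg1 : C.d0 (-1) = 0 := by rw [map_neg, hd01, neg_zero]
  rw [hdneg1, smul_sub, smul_smul, neg_smul, sub_neg_eq_add, zero_add]
  linear_combination (norm := module) hdinv
end

section
/- Let N : ℝ → ℝ be nondecreasing with the increment bound |N(λ−τ) − N(λ)| ≤ C(1+|τ|)^{m+1} λ^m for λ > 1, and let χ̂ : ℝ → ℝ be nonnegative, integrable, with (1+|τ|)^{m+1} χ̂(τ) integrable and ∫ χ̂ = 2π. If ∫_{ℝ} N(λ−τ) χ̂(τ) dτ = A·λ^{m+1} + O(λ^m) as λ → +∞, then N(λ) = (A/(2π))·λ^{m+1} + O(λ^m). -/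
open MeasureTheory

/-- Let `N : ℝ → ℝ` be nondecreasing with the increment bound
`|N(λ-τ) - N(λ)| ≤ C(1+|τ|)^{m+1} λ^m` for `λ > 1`, and let `χ̂ : ℝ → ℝ` be
nonnegative, integrable, with `(1+|τ|)^{m+1} χ̂(τ)` integrable and `∫ χ̂ = 2π`.
If `∫_ℝ N(λ-τ) χ̂(τ) dτ = A·λ^{m+1} + O(λ^m)` as `λ → +∞`, then
`N(λ) = (A/(2π))·λ^{m+1} + O(λ^m)`. -/
theorem tauberian_conclusion (N : ℝ → ℝ) (χhat : ℝ → ℝ) (A C m : ℝ)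
    (hC : 0 < C) (hm : 0 < m) (hmono : Monotone N)
    (hincr : ∀ (τ l : ℝ), 1 < l →
      |N (l - τ) - N l| ≤ C * (1 + |τ|) ^ (m + 1) * l ^ m)
    (hχpos : ∀ τ, 0 ≤ χhat τ)
    (hχint : Integrable χhat)
    (hχwint : Integrable fun τ => (1 + |τ|) ^ (m + 1) * χhat τ)
    (hχtot : ∫ τ : ℝ, χhat τ = 2 * Real.pi)
    (hNint : ∀ l : ℝ, Integrable fun τ => N (l - τ) * χhat τ)
    (hasymp : ∃ C₀ Λ : ℝ, ∀ l ≥ Λ,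
      |(∫ τ : ℝ, N (l - τ) * χhat τ) - A * l ^ (m + 1)| ≤ C₀ * l ^ m) :
    ∃ C₁ Λ₁ : ℝ, ∀ l ≥ Λ₁,
      |N l - A / (2 * Real.pi) * l ^ (m + 1)| ≤ C₁ * l ^ m := by
  obtain ⟨C₀, Λ, hΛ⟩ := hasymp
  set K := ∫ τ : ℝ, (1 + |τ|) ^ (m + 1) * χhat τ with hK
  have hπ : (0:ℝ) < 2 * Real.pi := by positivity
  refine ⟨(C₀ + C * K) / (2 * Real.pi), max Λ 2, fun l hl => ?_⟩
  have hl1 : (1:ℝ) < l := lt_of_lt_of_le one_lt_two (le_trans (le_max_right _ _) hl)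
  have hl0 : (0:ℝ) ≤ l := by linarith
  have hlm : (0:ℝ) ≤ l ^ m := Real.rpow_nonneg hl0 m
  have hdiff : |(∫ τ : ℝ, N (l - τ) * χhat τ) - N l * (2 * Real.pi)| ≤ C * K * l ^ m := by
    have h1 : (∫ τ : ℝ, N (l - τ) * χhat τ) - N l * (2 * Real.pi)
        = ∫ τ : ℝ, (N (l - τ) - N l) * χhat τ := by
      rw [← hχtot, ← integral_const_mul (N l), ← integral_sub (hNint l) (hχint.const_mul _)]
      congr 1
      ext τ
      ring
    rw [h1]
    calc |∫ τ : ℝ, (N (l - τ) - N l) * χhat τ|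
        ≤ ∫ τ : ℝ, |(N (l - τ) - N l) * χhat τ| := by
          simpa only [Real.norm_eq_abs] using
            norm_integral_le_integral_norm (μ := volume) (fun τ => (N (l - τ) - N l) * χhat τ)
      _ ≤ ∫ τ : ℝ, C * l ^ m * ((1 + |τ|) ^ (m + 1) * χhat τ) := by
          apply integral_mono_of_nonneg
          · filter_upwards with τ using abs_nonneg _
          · exact hχwint.const_mul _
          · filter_upwards with τ
            rw [abs_mul, abs_of_nonneg (hχpos τ)]
            have := hincr τ l hl1
            have h2 : |N (l - τ) - N l| * χhat τ
                ≤ (C * (1 + |τ|) ^ (m + 1) * l ^ m) * χhat τ :=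
              mul_le_mul_of_nonneg_right this (hχpos τ)
            calc |N (l - τ) - N l| * χhat τ
                ≤ (C * (1 + |τ|) ^ (m + 1) * l ^ m) * χhat τ := h2
              _ = C * l ^ m * ((1 + |τ|) ^ (m + 1) * χhat τ) := by ring
      _ = C * K * l ^ m := by rw [integral_const_mul]; ring
  have hmain := hΛ l (le_trans (le_max_left _ _) hl)
  have heq : N l - A / (2 * Real.pi) * l ^ (m + 1)
      = (N l * (2 * Real.pi) - A * l ^ (m + 1)) / (2 * Real.pi) := by
    field_simp
  rw [heq, abs_div, abs_of_pos hπ, div_le_iff₀ hπ]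
  have htri : |N l * (2 * Real.pi) - A * l ^ (m + 1)|
      ≤ C * K * l ^ m + C₀ * l ^ m := by
    calc |N l * (2 * Real.pi) - A * l ^ (m + 1)|
        ≤ |N l * (2 * Real.pi) - (∫ τ : ℝ, N (l - τ) * χhat τ)|
          + |(∫ τ : ℝ, N (l - τ) * χhat τ) - A * l ^ (m + 1)| := abs_sub_le _ _ _
      _ ≤ C * K * l ^ m + C₀ * l ^ m := by
          have h3 : |N l * (2 * Real.pi) - (∫ τ : ℝ, N (l - τ) * χhat τ)| ≤ C * K * l ^ m := by
            rw [abs_sub_comm]; exact hdiff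
          exact add_le_add h3 hmain
  calc |N l * (2 * Real.pi) - A * l ^ (m + 1)|
      ≤ C * K * l ^ m + C₀ * l ^ m := htri
    _ = (C₀ + C * K) / (2 * Real.pi) * l ^ m * (2 * Real.pi) := by
        field_simp
        ring
end
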